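/- Let π be a finite group and L a non-degenerate π-algebra over K with inner product η(a,b) = Tr(μ_{ab}: L → L). For each α ∈ π let b_α ∈ L_α ⊗ L_{α⁻¹} be the canonical copairing and b̂_α = Σᵢ pᵢ^α·qᵢ^α ∈ L_1. Then Σ_{α∈π} b̂_α = 1_L. -/

import Mathlib

/-- A `G`-algebra (`G`-graded associative unital `K`-algebra with projective
finite-type components), realized as a grading of an ambient algebra `A` by
submodules. -/
structure GradedPiAlgebra (K : Type*) [CommRing K] (A : Type*) [Ring A] [Algebra K A]
    (G : Type*) [Group G] [DecidableEq G] where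
  comp : G → Submodule K A
  one_mem : (1 : A) ∈ comp 1
  mul_mem : ∀ {α β : G} {a b : A}, a ∈ comp α → b ∈ comp β → a * b ∈ comp (α * β)
  internal : DirectSum.IsInternal comp
  projective : ∀ α : G, Module.Projective K (comp α)
  finite : ∀ α : G, Module.Finite K (comp α)

section Aux

variable {K : Type*} [CommRing K] {A : Type*} [Ring A] [Algebra K A]
  {G : Type*} [Group G] [DecidableEq G] [Fintype G]

/-- The projection onto the `β`-component of an internal direct sum decomposition,
viewed as an endomorphism of the ambient module. -/
noncomputable def gradedProjAux (N : G → Submodule K A) (h : DirectSum.IsInternal N) (β : G) :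
    A →ₗ[K] A :=
  (N β).subtype ∘ₗ (DirectSum.component K G (fun γ => N γ) β) ∘ₗ
    (LinearEquiv.ofBijective (DirectSum.coeLinearMap N) h).symm.toLinearMap

theorem gradedProjAux_mem (N : G → Submodule K A) (h : DirectSum.IsInternal N) (β : G) (a : A) :
    gradedProjAux N h β a ∈ N β := SetLike.coe_mem _

theorem gradedProjAux_eq_zero (N : G → Submodule K A) (h : DirectSum.IsInternal N)
    {γ β : G} {a : A} (ha : a ∈ N γ) (hne : γ ≠ β) : gradedProjAux N h β a = 0 := by
  have := h.ofBijective_coeLinearMap_of_mem_ne hne ha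
  simp [gradedProjAux, ← DirectSum.apply_eq_component, this]

theorem gradedProjAux_eq_self (N : G → Submodule K A) (h : DirectSum.IsInternal N)
    {γ : G} {a : A} (ha : a ∈ N γ) : gradedProjAux N h γ a = a := by
  have := h.ofBijective_coeLinearMap_of_mem ha
  simp [gradedProjAux, ← DirectSum.apply_eq_component, this]

theorem sum_gradedProjAux (N : G → Submodule K A) (h : DirectSum.IsInternal N) (a : A) :
    ∑ β, gradedProjAux N h β a = a := by
  set e := LinearEquiv.ofBijective (DirectSum.coeLinearMap N) h with he
  have key : ∀ β, gradedProjAux N h β a = DirectSum.coeLinearMap N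
      (DirectSum.of (fun γ => N γ) β ((e.symm a) β)) := by
    intro β
    simp [gradedProjAux, ← DirectSum.apply_eq_component, DirectSum.coeLinearMap_of, he]
  rw [Finset.sum_congr rfl (fun β _ => key β), ← map_sum, DirectSum.sum_univ_of]
  exact e.apply_symm_apply a

end Aux


/-- Let `π` be a finite group and `L` a non-degenerate `π`-algebra
over `K`, with inner product `η(a,b) = Tr(μ_{ab} : L → L)`. For each `α ∈ π`, let
`b_α ∈ L_α ⊗ L_{α⁻¹}` be the canonical copairing (given by families `p α`, `q α`
with the reproducing properties) and `b̂_α = Σᵢ pᵢ^α·qᵢ^α ∈ L_1`.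
Then `Σ_{α∈π} b̂_α = 1_L`. -/
theorem nondegenerate_copairing_sum_eq_one {K : Type*} [CommRing K]
    {A : Type*} [Ring A] [Algebra K A] {G : Type*} [Group G] [DecidableEq G] [Fintype G]
    (S : GradedPiAlgebra K A G)
    -- the inner product `η(a,b) = Tr(μ_{ab} : L → L)` is non-degenerate:
    (hnd : ∃ B : A →ₗ[K] A →ₗ[K] K,
      (∀ x y : A, B x y = LinearMap.trace K A (LinearMap.mulLeft K (x * y))) ∧
      Function.Bijective B ∧ Function.Bijective B.flip)
    (n : G → ℕ) (p q : ∀ α : G, Fin (n α) → A)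
    (hp : ∀ (α : G) (i : Fin (n α)), p α i ∈ S.comp α)
    (hq : ∀ (α : G) (i : Fin (n α)), q α i ∈ S.comp α⁻¹)
    (hrepP : ∀ (α : G), ∀ a ∈ S.comp α,
      a = ∑ i, LinearMap.trace K A (LinearMap.mulLeft K (a * q α i)) • p α i)
    (hrepQ : ∀ (α : G), ∀ b ∈ S.comp α⁻¹,
      b = ∑ i, LinearMap.trace K A (LinearMap.mulLeft K (p α i * b)) • q α i) :
    ∑ α : G, ∑ i, p α i * q α i = (1 : A) := by
  classical
  obtain ⟨B, hB, hBbij, -⟩ := hnd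
  set L : A := ∑ α : G, ∑ i, p α i * q α i with hLdef
  suffices hkey : B L = B 1 from hBbij.injective hkey
  by_cases H : ∃ s : Finset A, Nonempty (Module.Basis s K A)
  · -- `A` has a finite basis, so the trace behaves properly.
    obtain ⟨bs, ⟨bA⟩⟩ := H
    haveI : Module.Free K A := Module.Free.of_basis bA
    haveI : Module.Finite K A := Module.Finite.of_basis bA
    -- `T z = Tr(μ_z)`
    set T : A →ₗ[K] K := (LinearMap.trace K A) ∘ₗ (LinearMap.mul K A) with hTdef
    have hT : ∀ z : A, T z = LinearMap.trace K A (LinearMap.mulLeft K z) := fun _ => rfl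
    have hTcyc : ∀ a b : A, T (a * b) = T (b * a) := by
      intro a b
      rw [hT, hT, LinearMap.mulLeft_mul, LinearMap.mulLeft_mul]
      exact LinearMap.trace_mul_comm K (LinearMap.mulLeft K a) (LinearMap.mulLeft K b)
    -- the graded projections
    set P : G → (A →ₗ[K] A) := gradedProjAux S.comp S.internal with hPdef
    have hPmem : ∀ (β : G) (a : A), P β a ∈ S.comp β := gradedProjAux_mem _ _
    have hPzero : ∀ {γ β : G} {a : A}, a ∈ S.comp γ → γ ≠ β → P β a = 0 :=
      fun h1 h2 => gradedProjAux_eq_zero _ _ h1 h2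
    have hPself : ∀ {γ : G} {a : A}, a ∈ S.comp γ → P γ a = a :=
      fun h1 => gradedProjAux_eq_self _ _ h1
    have hPsum : ∀ a : A, ∑ β, P β a = a := sum_gradedProjAux _ _
    -- the global dual system
    set ι' := (β : G) × Fin (n β) with hι'
    set s : A →ₗ[K] (ι' → K) :=
      LinearMap.pi (fun j : ι' => T ∘ₗ (LinearMap.mulRight K (q j.1 j.2)) ∘ₗ (P j.1)) with hsdef
    set t : (ι' → K) →ₗ[K] A :=
      ∑ j : ι', LinearMap.smulRight (LinearMap.proj j) (p j.1 j.2) with htdef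
    have hsa : ∀ (a : A) (j : ι'), s a j = T (P j.1 a * q j.1 j.2) := fun a j => rfl
    have hta : ∀ v : ι' → K, t v = ∑ j : ι', v j • p j.1 j.2 := by
      intro v
      simp [htdef, LinearMap.sum_apply, LinearMap.smulRight_apply, LinearMap.proj_apply]
    have hts : ∀ a : A, t (s a) = a := by
      intro a
      rw [hta]
      have : ∀ j : ι', s a j • p j.1 j.2
          = LinearMap.trace K A (LinearMap.mulLeft K (P j.1 a * q j.1 j.2)) • p j.1 j.2 := by
        intro j; rw [hsa, hT]
      rw [Finset.sum_congr rfl (fun j _ => this j), ← Finset.univ_sigma_univ, Finset.sum_sigma]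
      calc ∑ β : G, ∑ i : Fin (n β),
            LinearMap.trace K A (LinearMap.mulLeft K (P β a * q β i)) • p β i
          = ∑ β : G, P β a :=
            Finset.sum_congr rfl (fun β _ => (hrepP β (P β a) (hPmem β a)).symm)
        _ = a := hPsum a
    have hteval : ∀ j : ι', t (Pi.single j 1) = p j.1 j.2 := by
      intro j
      rw [hta]
      simp [Pi.single_apply, ite_smul]
      convert (Finset.sum_ite_eq' Finset.univ j (fun x : ι' => p x.1 x.2)).trans (if_pos (Finset.mem_univ j)) using 1
    -- the trace formula coming from the dual system
    have htrace : ∀ f : A →ₗ[K] A,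
        LinearMap.trace K A f = ∑ j : ι', T (P j.1 (f (p j.1 j.2)) * q j.1 j.2) := by
      intro f
      have h1 : f = (f ∘ₗ t) ∘ₗ s := by ext a; simp [hts]
      rw [h1, LinearMap.trace_comp_comm' s (f ∘ₗ t),
        LinearMap.trace_eq_matrix_trace K (Pi.basisFun K ι'), Matrix.trace]
      refine Finset.sum_congr rfl fun j _ => ?_
      simp [Matrix.diag, LinearMap.toMatrix_apply, hts, hteval, hsa]
    -- `T` vanishes on components of nontrivial degree
    have hTzero : ∀ {γ : G} (z : A), z ∈ S.comp γ → γ ≠ 1 → T z = 0 := by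
      intro γ z hz hγ
      rw [hT, htrace (LinearMap.mulLeft K z)]
      refine Finset.sum_eq_zero fun j _ => ?_
      have hmem : z * p j.1 j.2 ∈ S.comp (γ * j.1) := S.mul_mem hz (hp j.1 j.2)
      have hne : γ * j.1 ≠ j.1 := fun hcon => hγ (by simpa using hcon)
      rw [LinearMap.mulLeft_apply, hPzero hmem hne, zero_mul, map_zero]
    -- projections against left multiplication
    have hPmul : ∀ (y : A) {β : G} {c : A}, c ∈ S.comp β → P β (y * c) = P 1 y * c := by
      intro y β c hc
      conv_lhs => rw [← hPsum y, Finset.sum_mul, map_sum]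
      rw [Finset.sum_eq_single 1]
      · exact congrArg (· * c) rfl ▸ hPself (by simpa using S.mul_mem (hPmem 1 y) hc)
      · intro γ _ hγ
        have hmem : P γ y * c ∈ S.comp (γ * β) := S.mul_mem (hPmem γ y) hc
        have hne : γ * β ≠ β := fun hcon => hγ (by simpa using hcon)
        exact hPzero hmem hne
      · intro hcon; exact absurd (Finset.mem_univ 1) hcon
    -- `L` lives in degree 1
    have hLmem : L ∈ S.comp 1 := by
      rw [hLdef]
      refine Submodule.sum_mem _ fun α _ => Submodule.sum_mem _ fun i _ => ?_
      simpa using S.mul_mem (hp α i) (hq α i)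
    have hLsigma : ∑ j : ι', p j.1 j.2 * q j.1 j.2 = L := by
      rw [hLdef, ← Finset.univ_sigma_univ, Finset.sum_sigma]
    -- key identity 1 : `T y = T (L * (P 1 y))`
    have key1 : ∀ y : A, T y = T (L * P 1 y) := by
      intro y
      have h1 : T y = ∑ j : ι', T (P j.1 (y * p j.1 j.2) * q j.1 j.2) := by
        rw [hT, htrace (LinearMap.mulLeft K y)]
        exact Finset.sum_congr rfl fun j _ => by rw [LinearMap.mulLeft_apply]
      have h2 : ∀ j : ι', T (P j.1 (y * p j.1 j.2) * q j.1 j.2)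
          = T (P 1 y * (p j.1 j.2 * q j.1 j.2)) := by
        intro j
        rw [hPmul y (hp j.1 j.2), mul_assoc]
      rw [h1, Finset.sum_congr rfl (fun j _ => h2 j), ← map_sum, ← Finset.mul_sum, hLsigma,
        hTcyc]
    -- key identity 2 : `T (L * y) = T (L * (P 1 y))`
    have key2 : ∀ y : A, T (L * y) = T (L * P 1 y) := by
      intro y
      conv_lhs => rw [← hPsum y, Finset.mul_sum, map_sum]
      rw [Finset.sum_eq_single 1]
      · intro γ _ hγ
        have hmem : L * P γ y ∈ S.comp γ := by
          simpa using S.mul_mem hLmem (hPmem γ y)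
        exact hTzero _ hmem hγ
      · intro hcon; exact absurd (Finset.mem_univ 1) hcon
    -- conclude
    apply LinearMap.ext
    intro y
    rw [hB, hB]
    have : T (L * y) = T (1 * y) := by
      rw [one_mul, key2, ← key1]
    calc LinearMap.trace K A (LinearMap.mulLeft K (L * y))
        = T (L * y) := (hT _).symm
      _ = T (1 * y) := this
      _ = LinearMap.trace K A (LinearMap.mulLeft K (1 * y)) := hT _
  · -- degenerate case: the trace is identically zero.
    apply LinearMap.ext
    intro y
    rw [hB, hB, LinearMap.trace, dif_neg H]
    simp
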